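/- Assume a(i,i) = 2 for all i ∈ I. Define N^Λ(μ,k) := N(d_μ, μ, k) + #{1 ≤ j < k : μ_j = μ_k} for 1 ≤ k ≤ n. Then Σ_{w ∈ S(μ,ν̃)} ∏_{t=1}^{n} N(w, μ, t) = ( ∏_{i=1}^{p} b_i! ) · ∏_{t=1}^{n} N^Λ(μ,t), where S(μ,ν̃) := {w ∈ S_n : wμ = ν̃}. (This is the combinatorial identity underlying Theorem 5.5 of the paper, computing dim e(ν̃)R^Λ(β)e(μ).) -/

import Mathlib

open Finset

/-- `N(w,μ,t) = L(μ_t) − Σ_{j ∈ J_w^{<t}} a(μ_t, μ_j)`, where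
`J_w^{<t} = {j < t : w(j) < w(t)}`. -/
def Nfun {I : Type*} (a : I → I → ℤ) (L : I → ℤ) {n : ℕ}
    (w : Equiv.Perm (Fin n)) (μ : Fin n → I) (t : Fin n) : ℤ :=
  L (μ t) - ∑ j ∈ Finset.univ.filter (fun j => j < t ∧ w j < w t), a (μ t) (μ j)

/-- number of earlier occurrences of the value `μ t`. -/
def mfun {I : Type*} [DecidableEq I] {n : ℕ} (μ : Fin n → I) (t : Fin n) : ℕ :=
  (Finset.univ.filter (fun j => j < t ∧ μ j = μ t)).card

/-- number of earlier occurrences of `μ t` which `w` keeps below `w t`. -/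
def sfun {I : Type*} [DecidableEq I] {n : ℕ} (w : Equiv.Perm (Fin n))
    (μ : Fin n → I) (t : Fin n) : ℕ :=
  (Finset.univ.filter (fun j => j < t ∧ μ j = μ t ∧ w j < w t)).card

lemma aux_part (c : ℕ → ℕ) (h0 : c 0 = 0) :
    ∀ p x, x < c p → ∃ i, i < p ∧ c i ≤ x ∧ x < c (i + 1) := by
  intro p
  induction p with
  | zero => intro x hx; omega
  | succ q ih =>
      intro x hx
      by_cases h : c q ≤ x
      · exact ⟨q, Nat.lt_succ_self q, h, hx⟩
      · obtain ⟨i, hi, h1, h2⟩ := ih x (by omega)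
        exact ⟨i, by omega, h1, h2⟩

lemma aux_gauss (M : ℕ) (D : ℤ) :
    ∑ k ∈ range (M + 1), (D - 2 * (k : ℤ)) = (M + 1) * (D - M) := by
  induction M with
  | zero => simp
  | succ q ih => rw [Finset.sum_range_succ, ih]; push_cast; ring

/-- counting lemma: if `w⁻¹` maps `[lo,hi)` into the fiber of `v`, then the number of
`j` with `μ j = v` and `w j ∈ [lo,hi)` is `hi - lo`. -/
lemma aux_count {I : Type*} [DecidableEq I] {n : ℕ} (μ : Fin n → I)
    (w : Equiv.Perm (Fin n)) (v : I) (lo hi : ℕ) (hhi : hi ≤ n)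
    (hfib : ∀ k : Fin n, lo ≤ (k : ℕ) → (k : ℕ) < hi → μ (w⁻¹ k) = v) :
    (Finset.univ.filter
        (fun j : Fin n => μ j = v ∧ lo ≤ (w j : ℕ) ∧ (w j : ℕ) < hi)).card = hi - lo := by
  rw [← Nat.card_Ico lo hi]
  apply Finset.card_bij (fun j _ => ((w j : ℕ)))
  · intro j hj
    simp only [mem_filter, mem_univ, true_and] at hj
    exact Finset.mem_Ico.mpr ⟨hj.2.1, hj.2.2⟩
  · intro j1 h1 j2 h2 he
    exact w.injective (Fin.val_injective he)
  · intro v' hv'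
    rw [Finset.mem_Ico] at hv'
    refine ⟨w⁻¹ ⟨v', lt_of_lt_of_le hv'.2 hhi⟩, ?_, ?_⟩
    · simp only [mem_filter, mem_univ, true_and, Equiv.Perm.coe_inv, Equiv.apply_symm_apply]
      exact ⟨hfib _ hv'.1 hv'.2, hv'.1, hv'.2⟩
    · simp [Equiv.apply_symm_apply]

theorem stmt12 {I : Type*} [DecidableEq I] (a : I → I → ℤ) (L : I → ℤ)
    (ha : ∀ i, a i i = 2)
    (n p : ℕ) (nb : ℕ → I)
    (hdist : ∀ i < p, ∀ j < p, i ≠ j → nb i ≠ nb j)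
    (μ : Fin n → I) (hμ : ∀ k, ∃ i < p, μ k = nb i)
    (b : ℕ → ℕ) (hb : ∀ i, b i = (Finset.univ.filter (fun k : Fin n => μ k = nb i)).card)
    (c : ℕ → ℕ) (hc : ∀ i, c i = ∑ j ∈ Finset.range i, b j) (hcp : c p = n)
    (νt : Fin n → I)
    (hνt : ∀ i < p, ∀ k : Fin n, c i ≤ (k : ℕ) → (k : ℕ) < c (i + 1) → νt k = nb i)
    (d : Equiv.Perm (Fin n))
    (hd1 : ∀ i < p, ∀ k : Fin n, μ k = nb i → c i ≤ (d k : ℕ) ∧ (d k : ℕ) < c (i + 1))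
    (hd2 : ∀ k l : Fin n, k < l → μ k = μ l → d k < d l) :
    ∑ w ∈ Finset.univ.filter (fun w : Equiv.Perm (Fin n) => ∀ k, μ (w⁻¹ k) = νt k),
        ∏ t : Fin n, Nfun a L w μ t
      = (∏ i ∈ Finset.range p, ((b i).factorial : ℤ)) *
        ∏ t : Fin n,
          (Nfun a L d μ t
            + ((Finset.univ.filter (fun j : Fin n => j < t ∧ μ j = μ t)).card : ℤ)) := by
  -- basic facts about `c`
  have cmono : ∀ i j, i ≤ j → c i ≤ c j := by
    intro i j hij
    rw [hc, hc]
    exact Finset.sum_le_sum_of_subset (Finset.range_subset_range.2 hij)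
  have c0 : c 0 = 0 := by rw [hc]; simp
  have hcsucc : ∀ i, c (i + 1) = c i + b i := by
    intro i; rw [hc, hc, Finset.sum_range_succ]
  have hpart : ∀ x : ℕ, x < n → ∃ i, i < p ∧ c i ≤ x ∧ x < c (i + 1) := by
    intro x hx
    exact aux_part c c0 p x (by omega)
  have hnbinj : ∀ i i', i < p → i' < p → nb i = nb i' → i = i' := by
    intro i i' hi hi' he
    by_contra hne
    exact hdist i hi i' hi' hne he
  have hIuniq : ∀ i i' (x : ℕ), i < p → i' < p → c i ≤ x → x < c (i + 1) →
      c i' ≤ x → x < c (i' + 1) → i = i' := by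
    intro i i' x hi hi' h1 h2 h3 h4
    by_contra hne
    rcases Nat.lt_or_ge i i' with h | h
    · have := cmono (i + 1) i' h; omega
    · have hlt : i' < i := by omega
      have := cmono (i' + 1) i hlt; omega
  -- νt inversion
  have hνt' : ∀ i, i < p → ∀ x : Fin n, νt x = nb i →
      c i ≤ (x : ℕ) ∧ (x : ℕ) < c (i + 1) := by
    intro i hi x hx
    obtain ⟨i', hi', h1, h2⟩ := hpart x x.isLt
    have hv : νt x = nb i' := hνt i' hi' x h1 h2
    have : i = i' := hnbinj i i' hi hi' (hx ▸ hv : nb i = nb i')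
    subst this; exact ⟨h1, h2⟩
  -- block membership for permutations in S
  have hwblk : ∀ (w : Equiv.Perm (Fin n)), (∀ k, μ (w⁻¹ k) = νt k) →
      ∀ (j : Fin n) i, i < p → μ j = nb i →
        c i ≤ (w j : ℕ) ∧ (w j : ℕ) < c (i + 1) := by
    intro w hw j i hi hj
    have h1 : μ j = νt (w j) := by
      have := hw (w j)
      rwa [Equiv.Perm.coe_inv, Equiv.symm_apply_apply] at this
    obtain ⟨i', hi', hl, hr⟩ := hpart (w j) (w j).isLt
    have hv : νt (w j) = nb i' := hνt i' hi' (w j) hl hr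
    have : i = i' := hnbinj i i' hi hi' (by rw [← hj, h1, hv])
    subst this; exact ⟨hl, hr⟩
  -- cross-block comparison
  have hcross : ∀ i i', i < p → i' < p → i ≠ i' → ∀ x y : ℕ,
      c i ≤ x → x < c (i + 1) → c i' ≤ y → y < c (i' + 1) → (x < y ↔ i < i') := by
    intro i i' hi hi' hne x y h1 h2 h3 h4
    constructor
    · intro hxy
      by_contra hcon
      have hlt : i' < i := by omega
      have := cmono (i' + 1) i hlt
      omega
    · intro hii
      have := cmono (i + 1) i' hii
      omega
  -- Fact A : cross-block inversions agree with those of `d`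
  have hAeq : ∀ (w : Equiv.Perm (Fin n)), (∀ k, μ (w⁻¹ k) = νt k) → ∀ t : Fin n,
      Finset.univ.filter (fun j : Fin n => j < t ∧ μ j ≠ μ t ∧ w j < w t)
        = Finset.univ.filter (fun j : Fin n => j < t ∧ μ j ≠ μ t ∧ d j < d t) := by
    intro w hw t
    ext j
    simp only [mem_filter, mem_univ, true_and]
    have key : μ j ≠ μ t → (w j < w t ↔ d j < d t) := by
      intro hne
      obtain ⟨ij, hij, hμj⟩ := hμ j
      obtain ⟨it, hit, hμt⟩ := hμ t
      have hiji : ij ≠ it := by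
        intro hcon
        exact hne (by rw [hμj, hμt, hcon])
      have hwj := hwblk w hw j ij hij hμj
      have hwt := hwblk w hw t it hit hμt
      have hdj := hd1 ij hij j hμj
      have hdt := hd1 it hit t hμt
      rw [Fin.lt_def, Fin.lt_def,
        hcross ij it hij hit hiji _ _ hwj.1 hwj.2 hwt.1 hwt.2,
        hcross ij it hij hit hiji _ _ hdj.1 hdj.2 hdt.1 hdt.2]
    constructor
    · rintro ⟨h1, h2, h3⟩; exact ⟨h1, h2, (key h2).1 h3⟩
    · rintro ⟨h1, h2, h3⟩; exact ⟨h1, h2, (key h2).2 h3⟩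
  -- splitting of `Nfun`
  have hNsplit : ∀ (w : Equiv.Perm (Fin n)) (t : Fin n),
      Nfun a L w μ t = L (μ t) - 2 * (sfun w μ t : ℤ)
        - ∑ j ∈ Finset.univ.filter (fun j : Fin n => j < t ∧ μ j ≠ μ t ∧ w j < w t),
            a (μ t) (μ j) := by
    intro w t
    rw [Nfun]
    have hsplit : Finset.univ.filter (fun j : Fin n => j < t ∧ w j < w t)
        = Finset.univ.filter (fun j : Fin n => j < t ∧ μ j = μ t ∧ w j < w t)
          ∪ Finset.univ.filter (fun j : Fin n => j < t ∧ μ j ≠ μ t ∧ w j < w t) := by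
      ext j
      simp only [mem_filter, mem_union, mem_univ, true_and]
      tauto
    have hdisj : Disjoint
        (Finset.univ.filter (fun j : Fin n => j < t ∧ μ j = μ t ∧ w j < w t))
        (Finset.univ.filter (fun j : Fin n => j < t ∧ μ j ≠ μ t ∧ w j < w t)) := by
      rw [Finset.disjoint_left]
      intro j hj1 hj2
      simp only [mem_filter, mem_univ, true_and] at hj1 hj2
      exact hj2.2.1 hj1.2.1
    rw [hsplit, Finset.sum_union hdisj]
    have h2 : ∑ j ∈ Finset.univ.filter (fun j : Fin n => j < t ∧ μ j = μ t ∧ w j < w t),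
        a (μ t) (μ j) = 2 * (sfun w μ t : ℤ) := by
      have hterm : ∀ j ∈ Finset.univ.filter
          (fun j : Fin n => j < t ∧ μ j = μ t ∧ w j < w t), a (μ t) (μ j) = 2 := by
        intro j hj
        simp only [mem_filter, mem_univ, true_and] at hj
        rw [hj.2.1, ha]
      rw [Finset.sum_congr rfl hterm, Finset.sum_const, sfun, nsmul_eq_mul]
      ring
    rw [h2]; ring
  have hsd : ∀ t, sfun d μ t = mfun μ t := by
    intro t
    rw [sfun, mfun]
    congr 1
    ext j
    simp only [mem_filter, mem_univ, true_and]
    constructor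
    · rintro ⟨h1, h2, _⟩; exact ⟨h1, h2⟩
    · rintro ⟨h1, h2⟩; exact ⟨h1, h2, hd2 j t h1 h2⟩
  have hNw : ∀ (w : Equiv.Perm (Fin n)), (∀ k, μ (w⁻¹ k) = νt k) → ∀ t : Fin n,
      Nfun a L w μ t
        = (Nfun a L d μ t + 2 * (mfun μ t : ℤ)) - 2 * (sfun w μ t : ℤ) := by
    intro w hw t
    rw [hNsplit w t, hNsplit d t, hAeq w hw t, hsd t]
    ring
  have hsle : ∀ (w : Equiv.Perm (Fin n)) (t : Fin n), sfun w μ t ≤ mfun μ t := by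
    intro w t
    apply Finset.card_le_card
    intro j hj
    simp only [mem_filter, mem_univ, true_and] at hj ⊢
    exact ⟨hj.1, hj.2.1⟩
  -- the asymmetric contradiction lemma for injectivity of the code map
  have hasym : ∀ (w w' : Equiv.Perm (Fin n)),
      (∀ k, μ (w⁻¹ k) = νt k) → (∀ k, μ (w'⁻¹ k) = νt k) →
      ∀ t : Fin n, (∀ u : Fin n, t < u → w u = w' u) →
      sfun w μ t = sfun w' μ t → (w t : ℕ) < (w' t : ℕ) → False := by
    intro w w' hw hw' t htail hs hlt
    obtain ⟨i, hip, hμt⟩ := hμ t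
    have hwt := hwblk w hw t i hip hμt
    have hw't := hwblk w' hw' t i hip hμt
    have hcple : c (i + 1) ≤ n := by
      have := cmono (i + 1) p hip
      omega
    have hfib : ∀ (ww : Equiv.Perm (Fin n)), (∀ k, μ (ww⁻¹ k) = νt k) →
        ∀ lo hi : ℕ, c i ≤ lo → hi ≤ c (i + 1) →
        (Finset.univ.filter
          (fun j : Fin n => μ j = μ t ∧ lo ≤ (ww j : ℕ) ∧ (ww j : ℕ) < hi)).card
          = hi - lo := by
      intro ww hww lo hi hlo hhi
      apply aux_count μ ww (μ t) lo hi (le_trans hhi hcple)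
      intro k hk1 hk2
      rw [hww k, hνt i hip k (le_trans hlo hk1) (lt_of_lt_of_le hk2 hhi), hμt]
    have e1 := hfib w hw (c i) (w t) le_rfl (le_of_lt hwt.2)
    have e2 := hfib w' hw' (c i) (w' t) le_rfl (le_of_lt hw't.2)
    have e3 := hfib w hw (w t) (w' t) hwt.1 (le_of_lt hw't.2)
    have hauto : ∀ j : Fin n, μ j = μ t → c i ≤ (w j : ℕ) ∧ (w j : ℕ) < c (i+1) :=
      fun j hj => hwblk w hw j i hip (hj.trans hμt)
    have hauto' : ∀ j : Fin n, μ j = μ t → c i ≤ (w' j : ℕ) ∧ (w' j : ℕ) < c (i+1) :=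
      fun j hj => hwblk w' hw' j i hip (hj.trans hμt)
    -- ℕ-level version of sfun
    have hsfw : ∀ (ww : Equiv.Perm (Fin n)), sfun ww μ t =
        (Finset.univ.filter (fun j : Fin n =>
          (j : ℕ) < (t : ℕ) ∧ μ j = μ t ∧ (ww j : ℕ) < (ww t : ℕ))).card := by
      intro ww
      apply congrArg Finset.card
      ext j
      simp only [mem_filter, mem_univ, true_and, Fin.lt_def]
    -- decompose e1
    have d1 : sfun w μ t
        + (Finset.univ.filter (fun j : Fin n =>
            (t : ℕ) < (j : ℕ) ∧ μ j = μ t ∧ (w j : ℕ) < (w t : ℕ))).card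
        = (w t : ℕ) - c i := by
      rw [← e1, hsfw w]
      rw [← Finset.card_union_of_disjoint ?hd]
      case hd =>
        rw [Finset.disjoint_left]
        intro j hj1 hj2
        simp only [mem_filter, mem_univ, true_and] at hj1 hj2
        omega
      apply congrArg Finset.card
      ext j
      simp only [mem_filter, mem_union, mem_univ, true_and]
      constructor
      · rintro (⟨h1, h2, h3⟩ | ⟨h1, h2, h3⟩) <;>
          exact ⟨h2, (hauto j h2).1, h3⟩
      · rintro ⟨h1, h2, h3⟩
        rcases Nat.lt_trichotomy (j : ℕ) (t : ℕ) with hj | hj | hj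
        · exact Or.inl ⟨hj, h1, h3⟩
        · exfalso
          have : j = t := Fin.ext hj
          subst this
          omega
        · exact Or.inr ⟨hj, h1, h3⟩
    -- decompose e2 (tail entries of w' agree with w)
    have d2 : sfun w' μ t
        + (Finset.univ.filter (fun j : Fin n =>
            (t : ℕ) < (j : ℕ) ∧ μ j = μ t ∧ (w j : ℕ) < (w' t : ℕ))).card
        = (w' t : ℕ) - c i := by
      rw [← e2, hsfw w']
      rw [← Finset.card_union_of_disjoint ?hd2]
      case hd2 =>
        rw [Finset.disjoint_left]
        intro j hj1 hj2
        simp only [mem_filter, mem_univ, true_and] at hj1 hj2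
        omega
      apply congrArg Finset.card
      ext j
      simp only [mem_filter, mem_union, mem_univ, true_and]
      constructor
      · rintro (⟨h1, h2, h3⟩ | ⟨h1, h2, h3⟩)
        · exact ⟨h2, (hauto' j h2).1, h3⟩
        · refine ⟨h2, (hauto' j h2).1, ?_⟩
          rw [htail j (Fin.lt_def.mpr h1)] at h3
          exact h3
      · rintro ⟨h1, h2, h3⟩
        rcases Nat.lt_trichotomy (j : ℕ) (t : ℕ) with hj | hj | hj
        · exact Or.inl ⟨hj, h1, h3⟩
        · exfalso
          have : j = t := Fin.ext hj
          subst this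
          omega
        · refine Or.inr ⟨hj, h1, ?_⟩
          rw [htail j (Fin.lt_def.mpr hj)]
          exact h3
    -- split the tail part of d2 at the value (w t)
    have d4 : (Finset.univ.filter (fun j : Fin n =>
            (t : ℕ) < (j : ℕ) ∧ μ j = μ t ∧ (w j : ℕ) < (w' t : ℕ))).card
        = (Finset.univ.filter (fun j : Fin n =>
            (t : ℕ) < (j : ℕ) ∧ μ j = μ t ∧ (w j : ℕ) < (w t : ℕ))).card
          + (Finset.univ.filter (fun j : Fin n =>
            (t : ℕ) < (j : ℕ) ∧ μ j = μ t ∧ (w t : ℕ) ≤ (w j : ℕ)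
              ∧ (w j : ℕ) < (w' t : ℕ))).card := by
      rw [← Finset.card_union_of_disjoint ?hd4]
      case hd4 =>
        rw [Finset.disjoint_left]
        intro j hj1 hj2
        simp only [mem_filter, mem_univ, true_and] at hj1 hj2
        omega
      apply congrArg Finset.card
      ext j
      simp only [mem_filter, mem_union, mem_univ, true_and]
      constructor
      · rintro ⟨h1, h2, h3⟩
        rcases Nat.lt_or_ge (w j : ℕ) (w t : ℕ) with hj | hj
        · exact Or.inl ⟨h1, h2, hj⟩
        · exact Or.inr ⟨h1, h2, hj, h3⟩
      · rintro (⟨h1, h2, h3⟩ | ⟨h1, h2, h3, h4⟩)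
        · exact ⟨h1, h2, by omega⟩
        · exact ⟨h1, h2, h4⟩
    -- the middle count: strictly more elements than the tail (t itself)
    have d3 : (Finset.univ.filter (fun j : Fin n =>
            (t : ℕ) < (j : ℕ) ∧ μ j = μ t ∧ (w t : ℕ) ≤ (w j : ℕ)
              ∧ (w j : ℕ) < (w' t : ℕ))).card + 1 ≤ (w' t : ℕ) - (w t : ℕ) := by
      rw [← e3]
      have ht3 : t ∈ Finset.univ.filter
          (fun j : Fin n => μ j = μ t ∧ (w t : ℕ) ≤ (w j : ℕ)
            ∧ (w j : ℕ) < (w' t : ℕ)) := by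
        simp only [mem_filter, mem_univ, true_and]
        exact ⟨le_rfl, hlt⟩
      have hsub : Finset.univ.filter (fun j : Fin n =>
            (t : ℕ) < (j : ℕ) ∧ μ j = μ t ∧ (w t : ℕ) ≤ (w j : ℕ)
              ∧ (w j : ℕ) < (w' t : ℕ))
          ⊆ (Finset.univ.filter
            (fun j : Fin n => μ j = μ t ∧ (w t : ℕ) ≤ (w j : ℕ)
              ∧ (w j : ℕ) < (w' t : ℕ))).erase t := by
        intro j hj
        simp only [mem_filter, mem_univ, true_and, Finset.mem_erase] at hj ⊢
        refine ⟨?_, hj.2⟩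
        intro hcon
        subst hcon
        omega
      have hcard := Finset.card_le_card hsub
      rw [Finset.card_erase_of_mem ht3] at hcard
      have hpos : 1 ≤ (Finset.univ.filter
          (fun j : Fin n => μ j = μ t ∧ (w t : ℕ) ≤ (w j : ℕ)
            ∧ (w j : ℕ) < (w' t : ℕ))).card := Finset.card_pos.mpr ⟨t, ht3⟩
      omega
    have hciwt : c i ≤ (w t : ℕ) := hwt.1
    omega
  -- injectivity of the code map
  have hinj : ∀ (w : Equiv.Perm (Fin n)), (∀ k, μ (w⁻¹ k) = νt k) →
      ∀ (w' : Equiv.Perm (Fin n)), (∀ k, μ (w'⁻¹ k) = νt k) →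
      (∀ t, sfun w μ t = sfun w' μ t) → w = w' := by
    intro w hw w' hw' hss
    by_contra hne
    have hex : (Finset.univ.filter (fun t : Fin n => w t ≠ w' t)).Nonempty := by
      rcases Finset.eq_empty_or_nonempty
        (Finset.univ.filter (fun t : Fin n => w t ≠ w' t)) with he | hne2
      · exfalso
        apply hne
        apply Equiv.ext
        intro t
        by_contra hct
        have : t ∈ Finset.univ.filter (fun t : Fin n => w t ≠ w' t) :=
          Finset.mem_filter.mpr ⟨Finset.mem_univ t, hct⟩
        rw [he] at this
        exact absurd this (Finset.notMem_empty t)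
      · exact hne2
    set t := Finset.max' _ hex with htdef
    have htmem := Finset.max'_mem _ hex
    rw [Finset.mem_filter] at htmem
    have htail : ∀ u : Fin n, t < u → w u = w' u := by
      intro u hu
      by_contra hcu
      have hum : u ∈ Finset.univ.filter (fun t : Fin n => w t ≠ w' t) :=
        Finset.mem_filter.mpr ⟨Finset.mem_univ u, hcu⟩
      have := Finset.le_max' _ u hum
      rw [← htdef] at this
      exact absurd hu (not_lt.mpr this)
    rcases Nat.lt_trichotomy ((w t : Fin n) : ℕ) ((w' t : Fin n) : ℕ) with h | h | h
    · exact hasym w w' hw hw' t htail (hss t) h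
    · exact htmem.2 (Fin.ext h)
    · exact hasym w' w hw' hw t (fun u hu => (htail u hu).symm) (hss t).symm h
  -- Fact C : the product of the multiplicities is the product of the factorials
  have factC : ∏ t : Fin n, (mfun μ t + 1) = ∏ i ∈ Finset.range p, (b i).factorial := by
    have hgspec : ∀ k : Fin n, Nat.find (hμ k) < p ∧ μ k = nb (Nat.find (hμ k)) :=
      fun k => Nat.find_spec (hμ k)
    have hmaps : ∀ k : Fin n, k ∈ Finset.univ → Nat.find (hμ k) ∈ Finset.range p :=
      fun k _ => Finset.mem_range.mpr (hgspec k).1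
    rw [← Finset.prod_fiberwise_of_maps_to hmaps (fun t => mfun μ t + 1)]
    apply Finset.prod_congr rfl
    intro i hi
    rw [Finset.mem_range] at hi
    have hfe : Finset.univ.filter (fun k : Fin n => Nat.find (hμ k) = i)
        = Finset.univ.filter (fun k : Fin n => μ k = nb i) := by
      ext k
      simp only [mem_filter, mem_univ, true_and]
      constructor
      · intro hgk
        rw [(hgspec k).2, hgk]
      · intro hk
        exact hnbinj _ i (hgspec k).1 hi (by rw [← (hgspec k).2, hk])
    rw [hfe]
    have hcard : (Finset.univ.filter (fun k : Fin n => μ k = nb i)).card = b i :=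
      (hb i).symm
    set A := Finset.univ.filter (fun k : Fin n => μ k = nb i) with hA
    set e := A.orderIsoOfFin hcard with he
    have hμe : ∀ r : Fin (b i), μ ((e r : Fin n)) = nb i := by
      intro r
      exact (Finset.mem_filter.mp (e r).2).2
    have hinje : Function.Injective (fun r' : Fin (b i) => ((e r' : Fin n))) := by
      intro x y hxy
      exact e.toEquiv.injective (Subtype.ext hxy)
    have hm : ∀ r : Fin (b i), mfun μ ((e r : Fin n)) = (r : ℕ) := by
      intro r
      rw [mfun]
      have himg : Finset.univ.filter
            (fun j : Fin n => j < (e r : Fin n) ∧ μ j = μ ((e r : Fin n)))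
          = Finset.image (fun r' : Fin (b i) => ((e r' : Fin n)))
              (Finset.univ.filter (fun r' => r' < r)) := by
        ext j
        simp only [mem_filter, mem_univ, true_and, Finset.mem_image]
        constructor
        · rintro ⟨h1, h2⟩
          have hjA : j ∈ A := by
            rw [hA]
            exact Finset.mem_filter.mpr ⟨Finset.mem_univ j, by rw [h2, hμe r]⟩
          refine ⟨e.symm ⟨j, hjA⟩, ?_, ?_⟩
          · apply e.lt_iff_lt.mp
            rw [OrderIso.apply_symm_apply]
            exact Subtype.coe_lt_coe.mp (by simpa using h1)
          · rw [OrderIso.apply_symm_apply]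
        · rintro ⟨r', hr', rfl⟩
          constructor
          · exact Subtype.coe_lt_coe.mpr (e.lt_iff_lt.mpr hr')
          · rw [hμe r', hμe r]
      rw [himg, Finset.card_image_of_injective _ hinje]
      have : Finset.univ.filter (fun r' : Fin (b i) => r' < r) = Finset.Iio r := by
        ext r'
        simp
      rw [this, Fin.card_Iio]
    calc ∏ k ∈ A, (mfun μ k + 1) = ∏ x : A, (mfun μ (x : Fin n) + 1) :=
          (Finset.prod_coe_sort A (fun k => mfun μ k + 1)).symm
      _ = ∏ r : Fin (b i), (mfun μ ((e r : Fin n)) + 1) :=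
          (Equiv.prod_comp e.toEquiv (fun x : A => mfun μ (x : Fin n) + 1)).symm
      _ = ∏ r : Fin (b i), ((r : ℕ) + 1) := by
          apply Finset.prod_congr rfl
          intro r _
          rw [hm r]
      _ = (b i).factorial := by
          rw [Fin.prod_univ_eq_prod_range (fun k => k + 1) (b i)]
          exact Finset.prod_range_add_one_eq_factorial (b i)
  -- cardinality of the coset S
  have hνd : ∀ k, νt (d k) = μ k := by
    intro k
    obtain ⟨i, hi, hμk⟩ := hμ k
    have h := hd1 i hi k hμk
    rw [hνt i hi (d k) h.1 h.2, hμk]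
  have cardS : (Finset.univ.filter
      (fun w : Equiv.Perm (Fin n) => ∀ k, μ (w⁻¹ k) = νt k)).card
      = ∏ i ∈ Finset.range p, (b i).factorial := by
    rw [← Fintype.card_subtype]
    have hiff : ∀ w : Equiv.Perm (Fin n),
        (∀ k, μ (w⁻¹ k) = νt k) ↔ (νt ∘ ⇑((Equiv.mulRight d⁻¹) w) = νt) := by
      intro w
      have stage1 : (∀ k, μ (w⁻¹ k) = νt k) ↔ ∀ j, νt (w j) = μ j := by
        constructor
        · intro h j
          have := h (w j)
          rw [Equiv.Perm.coe_inv, Equiv.symm_apply_apply] at this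
          exact this.symm
        · intro h k
          have := h (w⁻¹ k)
          rw [Equiv.Perm.coe_inv, Equiv.apply_symm_apply] at this
          exact this.symm
      rw [stage1]
      constructor
      · intro h
        funext k
        show νt ((w * d⁻¹) k) = νt k
        rw [Equiv.Perm.mul_apply, h (d⁻¹ k), ← hνd (d⁻¹ k), Equiv.Perm.coe_inv, Equiv.apply_symm_apply]
      · intro h j
        have hj : νt ((w * d⁻¹) (d j)) = νt (d j) := congrFun h (d j)
        rw [Equiv.Perm.mul_apply, Equiv.Perm.coe_inv, Equiv.symm_apply_apply] at hj
        show νt (w j) = μ j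
        rw [hj, hνd j]
    rw [Fintype.card_congr (Equiv.subtypeEquiv
      (q := fun g : Equiv.Perm (Fin n) => νt ∘ ⇑g = νt) (Equiv.mulRight d⁻¹) hiff)]
    rw [DomMulAct.stabilizer_card' νt]
    have hfibcard : ∀ i, i < p → Fintype.card {k : Fin n // νt k = nb i} = b i := by
      intro i hi
      rw [Fintype.card_subtype]
      have hset : Finset.univ.filter (fun k : Fin n => νt k = nb i)
          = Finset.univ.filter (fun k : Fin n => c i ≤ (k : ℕ) ∧ (k : ℕ) < c (i + 1)) := by
        ext k
        simp only [mem_filter, mem_univ, true_and]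
        constructor
        · exact fun h => hνt' i hi k h
        · exact fun h => hνt i hi k h.1 h.2
      rw [hset]
      have hicard : (Finset.univ.filter
          (fun k : Fin n => c i ≤ (k : ℕ) ∧ (k : ℕ) < c (i + 1))).card
          = c (i + 1) - c i := by
        rw [← Nat.card_Ico (c i) (c (i + 1))]
        refine Finset.card_bij (fun (k : Fin n) _ => ((k : ℕ))) ?_ ?_ ?_
        · intro k hk
          simp only [mem_filter, mem_univ, true_and] at hk
          exact Finset.mem_Ico.mpr hk
        · intro k1 _ k2 _ hh
          exact Fin.val_injective hh
        · intro v hv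
          rw [Finset.mem_Ico] at hv
          have hvn : v < n := by
            have := cmono (i + 1) p hi
            omega
          refine ⟨⟨v, hvn⟩, ?_, rfl⟩
          simp only [mem_filter, mem_univ, true_and]
          exact hv
      rw [hicard, hcsucc]
      omega
    have himg : Finset.image νt Finset.univ
        = Finset.image nb ((Finset.range p).filter (fun i => b i ≠ 0)) := by
      ext v
      simp only [Finset.mem_image, mem_univ, true_and, mem_filter, Finset.mem_range]
      constructor
      · rintro ⟨k, rfl⟩
        obtain ⟨i, hi, h1, h2⟩ := hpart k k.isLt
        refine ⟨i, ⟨hi, ?_⟩, (hνt i hi k h1 h2).symm⟩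
        have := hcsucc i
        omega
      · rintro ⟨i, ⟨hi, hbne⟩, rfl⟩
        have hci : c i < c (i + 1) := by
          have := hcsucc i
          omega
        have hcin : c (i + 1) ≤ n := by
          have := cmono (i + 1) p hi
          omega
        exact ⟨⟨c i, by omega⟩, hνt i hi ⟨c i, by omega⟩ le_rfl hci⟩
    rw [himg, Finset.prod_image ?hinjnb]
    case hinjnb =>
      intro x hx y hy hxy
      rw [Finset.mem_coe, mem_filter, Finset.mem_range] at hx hy
      exact hnbinj x y hx.1 hy.1 hxy
    have step : ∏ i ∈ (Finset.range p).filter (fun i => b i ≠ 0),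
        (Fintype.card {k : Fin n // νt k = nb i}).factorial
        = ∏ i ∈ (Finset.range p).filter (fun i => b i ≠ 0), (b i).factorial := by
      apply Finset.prod_congr rfl
      intro i hi
      rw [hfibcard i (Finset.mem_range.mp (Finset.mem_filter.mp hi).1)]
    rw [step]
    apply Finset.prod_filter_of_ne
    intro x hx hfx
    intro hbx
    rw [hbx] at hfx
    exact hfx rfl
  -- cardinality of the code space
  have cardCodes : (Finset.univ : Finset (∀ t : Fin n, Fin (mfun μ t + 1))).card
      = ∏ i ∈ Finset.range p, (b i).factorial := by
    rw [Finset.card_univ, Fintype.card_pi]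
    simp only [Fintype.card_fin]
    exact factC
  have factCZ : ∏ t : Fin n, ((mfun μ t : ℤ) + 1)
      = ∏ i ∈ Finset.range p, ((b i).factorial : ℤ) := by
    have h := congrArg (fun x : ℕ => (x : ℤ)) factC
    push_cast at h
    exact h
  -- final assembly
  calc
    ∑ w ∈ Finset.univ.filter (fun w : Equiv.Perm (Fin n) => ∀ k, μ (w⁻¹ k) = νt k),
        ∏ t : Fin n, Nfun a L w μ t
      = ∑ w ∈ Finset.univ.filter (fun w : Equiv.Perm (Fin n) => ∀ k, μ (w⁻¹ k) = νt k),
          ∏ t : Fin n,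
            ((Nfun a L d μ t + 2 * (mfun μ t : ℤ)) - 2 * (sfun w μ t : ℤ)) := by
        apply Finset.sum_congr rfl
        intro w hw
        exact Finset.prod_congr rfl (fun t _ => hNw w (Finset.mem_filter.mp hw).2 t)
    _ = ∑ f ∈ (Finset.univ : Finset (∀ t : Fin n, Fin (mfun μ t + 1))),
          ∏ t : Fin n,
            ((Nfun a L d μ t + 2 * (mfun μ t : ℤ)) - 2 * ((f t : ℕ) : ℤ)) := by
        refine Finset.sum_bij
          (fun w _ => fun t => (⟨sfun w μ t, Nat.lt_succ_of_le (hsle w t)⟩ :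
            Fin (mfun μ t + 1))) (fun w _ => Finset.mem_univ _) ?_ ?_ ?_
        · intro w1 h1 w2 h2 heq
          apply hinj w1 (Finset.mem_filter.mp h1).2 w2 (Finset.mem_filter.mp h2).2
          intro t
          exact congrArg Fin.val (congrFun heq t)
        · intro f _
          obtain ⟨w, hw, hwf⟩ := Finset.surj_on_of_inj_on_of_card_le
            (fun w _ => fun t => (⟨sfun w μ t, Nat.lt_succ_of_le (hsle w t)⟩ :
              Fin (mfun μ t + 1)))
            (fun w _ => Finset.mem_univ _)
            (fun w1 w2 h1 h2 heq => hinj w1 (Finset.mem_filter.mp h1).2 w2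
              (Finset.mem_filter.mp h2).2
              (fun t => congrArg Fin.val (congrFun heq t)))
            (by rw [cardCodes, cardS]) f (Finset.mem_univ f)
          exact ⟨w, hw, hwf.symm⟩
        · intro w hw
          rfl
    _ = ∏ t : Fin n, ∑ j ∈ (Finset.univ : Finset (Fin (mfun μ t + 1))),
          ((Nfun a L d μ t + 2 * (mfun μ t : ℤ)) - 2 * ((j : ℕ) : ℤ)) := by
        have h := Finset.prod_univ_sum
          (fun t : Fin n => (Finset.univ : Finset (Fin (mfun μ t + 1))))
          (fun t j => (Nfun a L d μ t + 2 * (mfun μ t : ℤ)) - 2 * ((j : ℕ) : ℤ))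
        rw [Fintype.piFinset_univ] at h
        exact h.symm
    _ = ∏ t : Fin n, (((mfun μ t : ℤ) + 1)
          * ((Nfun a L d μ t + 2 * (mfun μ t : ℤ)) - (mfun μ t : ℤ))) := by
        apply Finset.prod_congr rfl
        intro t _
        rw [Fin.sum_univ_eq_sum_range
          (fun k => (Nfun a L d μ t + 2 * (mfun μ t : ℤ)) - 2 * (k : ℤ)) (mfun μ t + 1),
          aux_gauss (mfun μ t) (Nfun a L d μ t + 2 * (mfun μ t : ℤ))]
    _ = (∏ t : Fin n, ((mfun μ t : ℤ) + 1))
          * ∏ t : Fin n, ((Nfun a L d μ t + 2 * (mfun μ t : ℤ)) - (mfun μ t : ℤ)) :=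
        Finset.prod_mul_distrib
    _ = (∏ i ∈ Finset.range p, ((b i).factorial : ℤ)) *
        ∏ t : Fin n,
          (Nfun a L d μ t
            + ((Finset.univ.filter (fun j : Fin n => j < t ∧ μ j = μ t)).card : ℤ)) := by
        rw [factCZ]
        congr 1
        apply Finset.prod_congr rfl
        intro t _
        rw [mfun]
        ring
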